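/- arXiv:1510.05423 — 5 statements merged into one kernel-verified Lean document; each statement's English description precedes it below -/
import Mathlib

section
/- If G is a locally compact, σ-compact topological group with no small subgroups (i.e., there exists an identity neighbourhood containing no nontrivial subgroup), and U is a compact identity neighbourhood, then the set K = {Γ ∈ Sub(G) : Γ ∩ U = {1}} is open in the Chabauty topology on the space Sub(G) of closed subgroups of G. -/
open MeasureTheory Topology Pointwise

/-- The Chabauty topology on the space of closed subgroups of `G`, generated by the sets
`{H : H ∩ K = ∅}` for `K` compact and `{H : H ∩ U ≠ ∅}` for `U` open. -/
instance chabautyTopology {G : Type*} [Group G] [TopologicalSpace G] :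
    TopologicalSpace (ClosedSubgroup G) :=
  TopologicalSpace.generateFrom
    ({S | ∃ K : Set G, IsCompact K ∧ S = {H : ClosedSubgroup G | (H : Set G) ∩ K = ∅}} ∪
     {S | ∃ U : Set G, IsOpen U ∧ S = {H : ClosedSubgroup G | ((H : Set G) ∩ U).Nonempty}})

instance {G : Type*} [Group G] [TopologicalSpace G] :
    MeasurableSpace (ClosedSubgroup G) := borel _

instance {G : Type*} [Group G] [TopologicalSpace G] :
    BorelSpace (ClosedSubgroup G) := ⟨rfl⟩

/-- Conjugation of a closed subgroup: `H ↦ gHg⁻¹`. -/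
def conjClosedSubgroup {G : Type*} [Group G] [TopologicalSpace G] [IsTopologicalGroup G]
    (g : G) (H : ClosedSubgroup G) : ClosedSubgroup G where
  toSubgroup := H.toSubgroup.map (MulAut.conj g).toMonoidHom
  isClosed' := by
    have h : ((H.toSubgroup.map (MulAut.conj g).toMonoidHom : Subgroup G) : Set G)
        = ((Homeomorph.mulLeft g).trans (Homeomorph.mulRight g⁻¹)) '' (H : Set G) := by
      ext x
      simp [Subgroup.mem_map, MulAut.conj, mul_assoc]
      rfl
    show IsClosed ((H.toSubgroup.map (MulAut.conj g).toMonoidHom : Subgroup G) : Set G)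
    rw [h, Homeomorph.isClosed_image]
    exact H.isClosed'

/-- In a locally compact σ-compact group with no small subgroups, for a compact identity
neighbourhood `U`, the set `{Γ : Γ ∩ U = {1}}` is Chabauty-open. -/
theorem chabauty_open_of_NSS {G : Type*} [Group G] [TopologicalSpace G] [IsTopologicalGroup G] [T2Space G]
    [LocallyCompactSpace G] [SigmaCompactSpace G]
    (hNSS : ∃ V ∈ 𝓝 (1 : G), ∀ H : Subgroup G, (H : Set G) ⊆ V → H = ⊥)
    (U : Set G) (hUc : IsCompact U) (hU1 : U ∈ 𝓝 (1 : G)) :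
    IsOpen {Γ : ClosedSubgroup G | (Γ : Set G) ∩ U = {1}} := by
  obtain ⟨V, hV, hNSS⟩ := hNSS
  obtain ⟨W₁, hW₁o, hW₁1, hW₁mul⟩ := exists_open_nhds_one_mul_subset hU1
  set W : Set G := W₁ ∩ interior V ∩ (interior V)⁻¹ with hWdef
  have hWo : IsOpen W := (hW₁o.inter isOpen_interior).inter isOpen_interior.inv
  have h1iV : (1 : G) ∈ interior V := mem_interior_iff_mem_nhds.2 hV
  have hW1 : (1 : G) ∈ W := ⟨⟨hW₁1, h1iV⟩, by simpa using h1iV⟩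
  have hWV : W ⊆ V := fun x hx => interior_subset hx.1.2
  have hWiV : W⁻¹ ⊆ V := fun x hx => by
    have : x⁻¹ ∈ (interior V)⁻¹ := hx.2
    simpa using interior_subset (by simpa using this)
  have hWmul : W * W ⊆ U :=
    (Set.mul_subset_mul (fun x hx => hx.1.1) (fun x hx => hx.1.1)).trans hW₁mul
  have key : ∀ (Γ' : Subgroup G), ((Γ' : Set G) ∩ U ⊆ W) →
      ∀ x ∈ (Γ' : Set G) ∩ U, x = 1 := by
    intro Γ' hsub x hx
    have hpow : ∀ n : ℕ, x ^ (n + 1) ∈ (Γ' : Set G) ∩ U := by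
      intro n
      induction n with
      | zero => simpa using hx
      | succ n ih =>
        refine ⟨Γ'.pow_mem hx.1 _, ?_⟩
        rw [pow_succ]
        exact hWmul (Set.mul_mem_mul (hsub ih) (hsub hx))
    have hz : ∀ n : ℤ, x ^ n ∈ V := by
      intro n
      rcases n with m | m
      · cases m with
        | zero => simpa using mem_of_mem_nhds hV
        | succ k =>
          have h := hWV (hsub (hpow k))
          rw [show (Int.ofNat (k+1)) = ((k+1:ℕ) : ℤ) from rfl, zpow_natCast]
          exact h
      · rw [zpow_negSucc]
        refine hWiV ?_
        have := hsub (hpow m)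
        simpa using this
    have hbot : Subgroup.zpowers x = ⊥ := by
      refine hNSS _ ?_
      rintro y ⟨n, rfl⟩
      exact hz n
    have hxmem : x ∈ Subgroup.zpowers x := Subgroup.mem_zpowers x
    rw [hbot] at hxmem
    exact Subgroup.mem_bot.1 hxmem
  have heq : {Γ : ClosedSubgroup G | (Γ : Set G) ∩ U = {1}} =
      {Γ : ClosedSubgroup G | (Γ : Set G) ∩ (U \ W) = ∅} := by
    ext Γ
    simp only [Set.mem_setOf_eq]
    constructor
    · intro h
      rw [Set.eq_empty_iff_forall_notMem]
      rintro x ⟨hxΓ, hxU, hxW⟩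
      have hx1 : x ∈ ({1} : Set G) := h ▸ ⟨hxΓ, hxU⟩
      exact hxW (hx1 ▸ hW1)
    · intro h
      have hsub : (Γ : Set G) ∩ U ⊆ W := by
        rintro x ⟨hxΓ, hxU⟩
        by_contra hxW
        exact (Set.eq_empty_iff_forall_notMem.1 h x) ⟨hxΓ, hxU, hxW⟩
      refine Set.eq_singleton_iff_unique_mem.2
        ⟨⟨Γ.toSubgroup.one_mem, mem_of_mem_nhds hU1⟩, fun x hx => key Γ.toSubgroup hsub x hx⟩
  rw [heq]
  exact TopologicalSpace.isOpen_generateFrom_of_mem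
    (Or.inl ⟨U \ W, hUc.diff hWo, rfl⟩)
end

section
/- Let G be a locally compact, σ-compact group with NSS, and let V be an open identity neighbourhood containing no nontrivial subgroups with V·V ⊆ U for a compact identity neighbourhood U. Then a closed subgroup Γ of G intersects U nontrivially if and only if Γ intersects the compact set U \ V. -/
open MeasureTheory Topology Pointwise

/-- If all positive powers of `x` lie in a compact set `U`, then `x⁻¹` lies in the closure of
the set of positive powers of `x`. -/
lemma inv_mem_closure_of_pow_mem {G : Type*} [Group G] [TopologicalSpace G] [IsTopologicalGroup G]
    {x : G} {U : Set G} (hUc : IsCompact U) (h : ∀ n : ℕ, x ^ (n + 1) ∈ U) :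
    x⁻¹ ∈ closure {g : G | ∃ n : ℕ, g = x ^ (n + 1)} := by
  have hmap : Filter.map (fun n : ℕ => x ^ (n + 1)) Filter.atTop ≤ Filter.principal U := by
    rw [Filter.le_principal_iff, Filter.mem_map]
    exact Filter.Eventually.of_forall h
  obtain ⟨y, -, hy⟩ := hUc.exists_mapClusterPt hmap
  rw [mem_closure_iff_nhds]
  intro W hW
  -- `W'` is a neighbourhood of `1`
  set W' : Set G := (fun g => g * x⁻¹) ⁻¹' W with hW'def
  have hW' : W' ∈ 𝓝 (1 : G) := by
    have : ContinuousAt (fun g : G => g * x⁻¹) 1 := by fun_prop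
    apply this
    simpa using hW
  -- find `S ∈ 𝓝 1` with `s⁻¹ * t ∈ W'` for `s, t ∈ S`
  have hc : ContinuousAt (fun p : G × G => p.1⁻¹ * p.2) (1, 1) := by fun_prop
  have hpre : (fun p : G × G => p.1⁻¹ * p.2) ⁻¹' W' ∈ 𝓝 ((1 : G), (1 : G)) := by
    apply hc
    simpa using hW'
  rw [nhds_prod_eq, Filter.mem_prod_iff] at hpre
  obtain ⟨S₁, hS₁, S₂, hS₂, hS⟩ := hpre
  -- `N` is a neighbourhood of the cluster point `y`
  set N : Set G := (fun g => y⁻¹ * g) ⁻¹' (S₁ ∩ S₂) with hNdef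
  have hN : N ∈ 𝓝 y := by
    have : ContinuousAt (fun g : G => y⁻¹ * g) y := by fun_prop
    apply this
    simpa using Filter.inter_mem hS₁ hS₂
  have hfreq : ∃ᶠ n in Filter.atTop, x ^ (n + 1) ∈ N := by
    rw [mapClusterPt_iff_frequently] at hy
    exact hy N hN
  obtain ⟨n₁, hn₁⟩ := hfreq.exists
  obtain ⟨n₂, hn₂ge, hn₂⟩ := hfreq.forall_exists_of_atTop (n₁ + 2)
  -- now `x ^ (n₂ - n₁)` is close to `1`, hence `x ^ (n₂ - n₁ - 1)` is close to `x⁻¹`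
  have hs : y⁻¹ * x ^ (n₁ + 1) ∈ S₁ ∩ S₂ := hn₁
  have ht : y⁻¹ * x ^ (n₂ + 1) ∈ S₁ ∩ S₂ := hn₂
  have hst : (y⁻¹ * x ^ (n₁ + 1))⁻¹ * (y⁻¹ * x ^ (n₂ + 1)) ∈ W' :=
    hS (Set.mk_mem_prod hs.1 ht.2)
  obtain ⟨k, hk⟩ : ∃ k : ℕ, n₂ + 1 = (n₁ + 1) + (k + 2) := ⟨n₂ - n₁ - 2, by omega⟩
  have hsimp : (y⁻¹ * x ^ (n₁ + 1))⁻¹ * (y⁻¹ * x ^ (n₂ + 1)) = x ^ (k + 2) := by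
    rw [hk, pow_add]
    group
  rw [hsimp] at hst
  have hmem : x ^ (k + 2) * x⁻¹ ∈ W := hst
  have : x ^ (k + 1) ∈ W := by
    have : x ^ (k + 2) * x⁻¹ = x ^ (k + 1) := by
      rw [pow_succ]
      group
    rwa [this] at hmem
  exact ⟨x ^ (k + 1), this, ⟨k, rfl⟩⟩

/-- If `V ⊆ U` is an open identity neighbourhood containing no nontrivial subgroup with
`V * V ⊆ U`, then a closed subgroup `Γ` meets `U` nontrivially iff it meets `U \ V`. -/
theorem meets_nontrivially_iff_meets_compl {G : Type*} [Group G] [TopologicalSpace G] [IsTopologicalGroup G] [T2Space G]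
    [LocallyCompactSpace G] [SigmaCompactSpace G]
    (U V : Set G) (hUc : IsCompact U) (hU1 : U ∈ 𝓝 (1 : G))
    (hVo : IsOpen V) (hV1 : (1 : G) ∈ V) (hVU : V ⊆ U)
    (hVns : ∀ H : Subgroup G, (H : Set G) ⊆ V → H = ⊥)
    (hVV : V * V ⊆ U)
    (Γ : Subgroup G) (hΓ : IsClosed (Γ : Set G)) :
    (Γ : Set G) ∩ U ≠ {1} ↔ ((Γ : Set G) ∩ (U \ V)).Nonempty := by
  have hUcl : IsClosed U := hUc.isClosed
  -- key step: if `y ∈ Γ ∩ V` then either we find a point of `Γ ∩ (U \ V)`,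
  -- or all positive powers of `y` stay in `V`.
  have key : ∀ y : G, y ∈ Γ → y ∈ V →
      ((Γ : Set G) ∩ (U \ V)).Nonempty ∨ ∀ n : ℕ, y ^ (n + 1) ∈ V := by
    intro y hyΓ hyV
    by_cases hall : ∀ n : ℕ, y ^ (n + 1) ∈ V
    · exact Or.inr hall
    · push_neg at hall
      left
      have hex : ∃ n, y ^ (n + 1) ∉ V := hall
      classical
      set n := Nat.find hex with hn
      have hnspec : y ^ (n + 1) ∉ V := Nat.find_spec hex
      have hprev : y ^ n ∈ V := by
        rcases Nat.eq_zero_or_pos n with h0 | hpos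
        · simpa [h0] using hV1
        · have hm : n - 1 < n := by omega
          have h2 := Nat.find_min hex hm
          have h3 : y ^ ((n - 1) + 1) ∈ V := not_not.mp h2
          have h4 : (n - 1) + 1 = n := by omega
          rwa [h4] at h3
      refine ⟨y ^ (n + 1), ?_, ?_, hnspec⟩
      · exact pow_mem hyΓ (n + 1)
      · have : y ^ (n + 1) = y ^ n * y := by rw [pow_succ]
        rw [this]
        exact hVV (Set.mul_mem_mul hprev hyV)
  constructor
  · intro h
    -- there is `x ∈ Γ ∩ U` with `x ≠ 1`
    have h1 : (1 : G) ∈ (Γ : Set G) ∩ U := ⟨Γ.one_mem, mem_of_mem_nhds hU1⟩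
    have hx : ∃ x ∈ (Γ : Set G) ∩ U, x ≠ 1 := by
      by_contra hc
      push_neg at hc
      exact h (Set.eq_singleton_iff_unique_mem.mpr ⟨h1, hc⟩)
    obtain ⟨x, ⟨hxΓ, hxU⟩, hx1⟩ := hx
    by_cases hxV : x ∈ V
    · -- positive powers of x
      rcases key x hxΓ hxV with hdone | hpow
      · exact hdone
      · -- all positive powers of x are in V ⊆ U, so x⁻¹ ∈ U
        have hpowU : ∀ n : ℕ, x ^ (n + 1) ∈ U := fun n => hVU (hpow n)
        have hinvU : x⁻¹ ∈ U := by
          have hcl := inv_mem_closure_of_pow_mem hUc hpowU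
          have hsub : {g : G | ∃ n : ℕ, g = x ^ (n + 1)} ⊆ U := by
            rintro g ⟨n, rfl⟩
            exact hpowU n
          exact hUcl.closure_subset_iff.mpr hsub hcl
        by_cases hinvV : x⁻¹ ∈ V
        · rcases key x⁻¹ (inv_mem hxΓ) hinvV with hdone | hpow' 
          · exact hdone
          · -- all integer powers of x are in V, contradiction
            exfalso
            have hzp : ((Subgroup.zpowers x : Subgroup G) : Set G) ⊆ V := by
              rintro g ⟨k, rfl⟩
              rcases lt_trichotomy k 0 with hk | hk | hk
              · obtain ⟨m, hm⟩ : ∃ m : ℕ, k = -(m + 1 : ℕ) := ⟨(-k).toNat - 1, by omega⟩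
                have : (x : G) ^ k = x⁻¹ ^ (m + 1) := by
                  rw [hm, inv_pow, ← zpow_natCast, ← zpow_neg]
                simpa [this] using hpow' m
              · simpa [hk] using hV1
              · obtain ⟨m, hm⟩ : ∃ m : ℕ, k = (m + 1 : ℕ) := ⟨k.toNat - 1, by omega⟩
                have : (x : G) ^ k = x ^ (m + 1) := by
                  rw [hm, zpow_natCast]
                simpa [this] using hpow m
            have := hVns _ hzp
            have hxbot : x ∈ (⊥ : Subgroup G) := this ▸ Subgroup.mem_zpowers x
            exact hx1 (Subgroup.mem_bot.mp hxbot)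
        · exact ⟨x⁻¹, inv_mem hxΓ, hinvU, hinvV⟩
    · exact ⟨x, hxΓ, hxU, hxV⟩
  · rintro ⟨g, hgΓ, hgU, hgV⟩ heq
    have : g ∈ (Γ : Set G) ∩ U := ⟨hgΓ, hgU⟩
    rw [heq] at this
    exact hgV (this ▸ hV1)
end

section
/- Let G be a locally compact σ-compact group with NSS such that the set IRS_d(G) of invariant random subgroups concentrated on discrete subgroups is compact in the weak-* topology. Then IRS_d(G) is weakly uniformly discrete: for every ε > 0 there is an identity neighbourhood U_ε ⊆ G such that μ({Γ ∈ Sub(G) : Γ ∩ U_ε ≠ {1}}) < ε for every μ ∈ IRS_d(G). -/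
open MeasureTheory Topology

open Set Pointwise

section Aux

variable {G : Type*} [Group G] [TopologicalSpace G]

lemma chab_open_meets {U : Set G} (hU : IsOpen U) :
    IsOpen {H : ClosedSubgroup G | ((H : Set G) ∩ U).Nonempty} :=
  TopologicalSpace.isOpen_generateFrom_of_mem (Or.inr ⟨U, hU, rfl⟩)

lemma chab_open_avoids {K : Set G} (hK : IsCompact K) :
    IsOpen {H : ClosedSubgroup G | (H : Set G) ∩ K = ∅} :=
  TopologicalSpace.isOpen_generateFrom_of_mem (Or.inl ⟨K, hK, rfl⟩)

/-- Continuity of `Γ ↦ sup_{x ∈ Γ} g x` on the Chabauty space. -/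
lemma chab_continuous_sup (g : G → NNReal) (hg : Continuous g) (hb : ∀ x, g x ≤ 1)
    (hcpt : ∀ b : NNReal, 0 < b → IsCompact {x | b ≤ g x}) :
    Continuous (fun Γ : ClosedSubgroup G => sSup (g '' (Γ : Set G))) := by
  set h : ClosedSubgroup G → NNReal := fun Γ => sSup (g '' (Γ : Set G)) with hh
  have hne : ∀ Γ : ClosedSubgroup G, (g '' (Γ : Set G)).Nonempty :=
    fun Γ => ⟨g 1, ⟨1, Γ.toSubgroup.one_mem, rfl⟩⟩
  have hbdd : ∀ Γ : ClosedSubgroup G, BddAbove (g '' (Γ : Set G)) :=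
    fun Γ => ⟨1, fun y ⟨x, _, hxy⟩ => hxy ▸ hb x⟩
  rw [continuous_def]
  intro s hs
  replace hs : IsOpen[Preorder.topology NNReal] s := by
    rw [← OrderTopology.topology_eq_generate_intervals (α := NNReal)]; exact hs
  induction hs with
  | basic u hu =>
    obtain ⟨a, ha | ha⟩ := hu
    · -- u = Ioi a
      have : h ⁻¹' u = {Γ : ClosedSubgroup G | ((Γ : Set G) ∩ {x | a < g x}).Nonempty} := by
        ext Γ
        simp only [ha, mem_preimage, mem_Ioi, mem_setOf_eq]
        constructor
        · intro hlt
          obtain ⟨y, ⟨x, hxΓ, rfl⟩, hy⟩ := (lt_csSup_iff (hbdd Γ) (hne Γ)).mp hlt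
          exact ⟨x, hxΓ, hy⟩
        · rintro ⟨x, hxΓ, hx⟩
          exact lt_of_lt_of_le hx (le_csSup (hbdd Γ) ⟨x, hxΓ, rfl⟩)
      rw [this]
      exact chab_open_meets (isOpen_lt continuous_const hg)
    · -- u = Iio a
      have : h ⁻¹' u = ⋃ (b : NNReal) (_ : 0 < b) (_ : b < a),
          {Γ : ClosedSubgroup G | (Γ : Set G) ∩ {x | b ≤ g x} = ∅} := by
        ext Γ
        simp only [ha, mem_preimage, mem_Iio, mem_iUnion, mem_setOf_eq]
        constructor
        · intro hlt
          obtain ⟨b, hb1, hb2⟩ := exists_between hlt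
          refine ⟨b, lt_of_le_of_lt zero_le hb1, hb2, ?_⟩
          rw [Set.eq_empty_iff_forall_notMem]
          rintro x ⟨hxΓ, hbg⟩
          exact absurd (le_csSup (hbdd Γ) ⟨x, hxΓ, rfl⟩) (not_le.mpr (lt_of_lt_of_le hb1 hbg))
        · rintro ⟨b, hb0, hba, hempty⟩
          refine lt_of_le_of_lt (csSup_le (hne Γ) ?_) hba
          rintro y ⟨x, hxΓ, rfl⟩
          by_contra hc
          exact (Set.eq_empty_iff_forall_notMem.mp hempty x) ⟨hxΓ, le_of_lt (not_le.mp hc)⟩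
      rw [this]
      exact isOpen_iUnion fun b => isOpen_iUnion fun hb0 => isOpen_iUnion fun _ =>
        chab_open_avoids (hcpt b hb0)
  | univ => exact isOpen_univ
  | inter u v _ _ hu hv => exact (hu).inter (hv)
  | sUnion S _ hS =>
    rw [Set.preimage_sUnion]; exact isOpen_biUnion hS

end Aux


section Aux2

variable {G : Type*} [Group G] [TopologicalSpace G] [IsTopologicalGroup G]

/-- A continuous function that is constant `1` off a compact set is (left) uniformly
continuous, in the one-sided form we need. -/
lemma unif_cont_of_one_off_compact (F : G → ℝ) (hF : Continuous F) (P : Set G)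
    (hP : IsCompact P) (hF1 : ∀ x ∉ P, F x = 1) {δ : ℝ} (hδ : 0 < δ) :
    ∃ V ∈ 𝓝 (1 : G), ∀ x v, v ∈ V → |F (x * v) - F x| ≤ δ := by
  -- for each p, a neighborhood of 1 controlling F near p
  have key : ∀ p : G, ∃ Vp : Set G, IsOpen Vp ∧ (1 : G) ∈ Vp ∧
      ∀ w ∈ Vp * Vp, |F (p * w) - F p| ≤ δ / 2 := by
    intro p
    have hcont : Continuous fun w => |F (p * w) - F p| :=
      ((hF.comp (continuous_mul_left p)).sub continuous_const).abs
    have hopen : IsOpen {w : G | |F (p * w) - F p| < δ / 2} :=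
      isOpen_lt hcont continuous_const
    have h1 : (1 : G) ∈ {w : G | |F (p * w) - F p| < δ / 2} := by
      simp [mul_one, half_pos hδ]
    obtain ⟨Vp, hVopen, hV1, hVsub⟩ :=
      exists_open_nhds_one_mul_subset (hopen.mem_nhds h1)
    exact ⟨Vp, hVopen, hV1, fun w hw => le_of_lt (hVsub hw)⟩
  choose Vp hVopen hV1 hVctrl using key
  -- cover P by finitely many translates
  have hcover : P ⊆ ⋃ p : G, p • Vp p := fun x _ =>
    Set.mem_iUnion.mpr ⟨x, ⟨1, hV1 x, mul_one x⟩⟩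
  obtain ⟨T, hT⟩ := hP.elim_finite_subcover (fun p : G => p • Vp p)
    (fun p => (hVopen p).smul p) hcover
  -- the final neighborhood
  set V0 : Set G := ⋂ p ∈ T, Vp p with hV0
  have hV0nhds : V0 ∈ 𝓝 (1 : G) :=
    (Filter.biInter_mem T.finite_toSet).mpr fun p _ => (hVopen p).mem_nhds (hV1 p)
  refine ⟨V0 ∩ V0⁻¹, Filter.inter_mem hV0nhds ?_, ?_⟩
  · exact inv_mem_nhds_one G hV0nhds
  intro x v hv
  have hvV : ∀ p ∈ T, v ∈ Vp p := fun p hp => Set.mem_iInter₂.mp hv.1 p hp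
  have hvinvV : ∀ p ∈ T, v⁻¹ ∈ Vp p := fun p hp =>
    Set.mem_iInter₂.mp (Set.mem_inv.mp hv.2) p hp
  have main : ∀ y ∈ ⋃ p ∈ T, p • Vp p, ∀ u, (∀ p ∈ T, u ∈ Vp p) →
      |F (y * u) - F y| ≤ δ := by
    intro y hy u hu
    obtain ⟨p, hpT, w, hw, rfl⟩ := by
      simpa only [Set.mem_iUnion, Set.mem_smul_set, exists_prop] using hy
    have h1 : |F (p * w) - F p| ≤ δ / 2 := by
      have := hVctrl p (w * 1) (Set.mul_mem_mul hw (hV1 p))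
      simpa using this
    have h2 : |F (p * (w * u)) - F p| ≤ δ / 2 :=
      hVctrl p (w * u) (Set.mul_mem_mul hw (hu p hpT))
    calc |F (p * w * u) - F (p * w)|
        = |(F (p * (w * u)) - F p) - (F (p * w) - F p)| := by rw [mul_assoc]; ring_nf
      _ ≤ |F (p * (w * u)) - F p| + |F (p * w) - F p| := abs_sub _ _
      _ ≤ δ / 2 + δ / 2 := add_le_add h2 h1
      _ = δ := add_halves δ
  by_cases hx : x ∈ ⋃ p ∈ T, p • Vp p
  · exact main x hx v hvV
  · have hxP : x ∉ P := fun h => hx (hT h)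
    by_cases hxv : x * v ∈ ⋃ p ∈ T, p • Vp p
    · have := main (x * v) hxv v⁻¹ hvinvV
      rw [mul_assoc, mul_inv_cancel, mul_one] at this
      rw [abs_sub_comm] at this
      exact this
    · have hxvP : x * v ∉ P := fun h => hxv (hT h)
      rw [hF1 x hxP, hF1 (x * v) hxvP, sub_self, abs_zero]
      exact le_of_lt hδ

omit [TopologicalSpace G] [IsTopologicalGroup G] in
/-- Escape lemma: a nontrivial element of a set `Q` contained in a symmetric set `P`
containing no nontrivial subgroup has a power outside `Q` (with all earlier powers inside). -/
lemma escape_lemma (P : Set G) (hPNSS : ∀ H : Subgroup G, (H : Set G) ⊆ P → H = ⊥)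
    (hsym : P⁻¹ = P) (h1P : (1 : G) ∈ P) (Q : Set G) (hQP : Q ⊆ P) {x : G}
    (hx : x ≠ 1) (hxQ : x ∈ Q) :
    ∃ j : ℕ, x ^ (j + 2) ∉ Q ∧ x ^ (j + 1) ∈ Q := by
  have hex : ∃ n : ℕ, x ^ (n + 1) ∉ Q := by
    by_contra hall
    push_neg at hall
    have hsub : ((Subgroup.zpowers x : Subgroup G) : Set G) ⊆ P := by
      intro y hy
      obtain ⟨k, rfl⟩ := Subgroup.mem_zpowers_iff.mp hy
      match k with
      | Int.ofNat 0 => simpa using h1P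
      | Int.ofNat (n + 1) =>
        have h := hall n
        have : x ^ ((Int.ofNat (n+1) : ℤ)) = x ^ (n+1) := by
          rw [show ((Int.ofNat (n+1) : ℤ)) = ((n+1 : ℕ) : ℤ) from rfl, zpow_natCast]
        rw [this]
        exact hQP h
      | Int.negSucc n =>
        rw [zpow_negSucc, ← hsym]
        exact Set.inv_mem_inv.mpr (hQP (hall n))
    have := hPNSS _ hsub
    rw [Subgroup.zpowers_eq_bot] at this
    exact hx this
  classical
  obtain ⟨j, hspec, hmin⟩ : ∃ j : ℕ, x ^ (j + 1) ∉ Q ∧ ∀ m < j, ¬ (x ^ (m + 1) ∉ Q) :=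
    ⟨Nat.find hex, Nat.find_spec hex, fun m hm => Nat.find_min hex hm⟩
  match j, hspec, hmin with
  | 0, hspec, _ => exact absurd (by simpa using hxQ) hspec
  | (j' + 1), hspec, hmin =>
    exact ⟨j', by simpa [show j' + 1 + 1 = j' + 2 from rfl] using hspec,
      not_not.mp (by simpa using hmin j' (by omega))⟩

end Aux2


/-- If `G` has NSS and the space of discrete IRS's is weak-* compact, then the discrete IRS's are
weakly uniformly discrete. -/
theorem weakly_uniformly_discrete_of_compact {G : Type*} [Group G] [TopologicalSpace G] [IsTopologicalGroup G] [T2Space G]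
    [LocallyCompactSpace G] [SigmaCompactSpace G]
    (hNSS : ∃ V ∈ 𝓝 (1 : G), ∀ H : Subgroup G, (H : Set G) ⊆ V → H = ⊥)
    (hcpt : IsCompact {μ : ProbabilityMeasure (ClosedSubgroup G) |
      (∀ g : G, μ.toMeasure.map (conjClosedSubgroup g) = μ.toMeasure) ∧
      μ.toMeasure {Γ : ClosedSubgroup G | DiscreteTopology Γ.toSubgroup} = 1}) :
    ∀ ε : ENNReal, 0 < ε → ∃ U ∈ 𝓝 (1 : G), ∀ μ : ProbabilityMeasure (ClosedSubgroup G),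
      (∀ g : G, μ.toMeasure.map (conjClosedSubgroup g) = μ.toMeasure) →
      μ.toMeasure {Γ : ClosedSubgroup G | DiscreteTopology Γ.toSubgroup} = 1 →
      μ.toMeasure {Γ : ClosedSubgroup G | (Γ : Set G) ∩ U ≠ {1}} < ε := by
  classical
  intro ε hε
  set ε' : ENNReal := min ε 1 with hε'def
  have hε'0 : 0 < ε' := lt_min hε one_pos
  have hε'top : ε' ≠ ⊤ := ne_top_of_le_ne_top ENNReal.one_ne_top (min_le_right _ _)
  have hε'le1 : ε' ≤ 1 := min_le_right _ _
  suffices hmain : ∃ U ∈ 𝓝 (1 : G), ∀ μ : ProbabilityMeasure (ClosedSubgroup G),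
      (∀ g : G, μ.toMeasure.map (conjClosedSubgroup g) = μ.toMeasure) →
      μ.toMeasure {Γ : ClosedSubgroup G | DiscreteTopology Γ.toSubgroup} = 1 →
      μ.toMeasure {Γ : ClosedSubgroup G | (Γ : Set G) ∩ U ≠ {1}} < ε' by
    obtain ⟨U, hU, h⟩ := hmain
    exact ⟨U, hU, fun μ h1 h2 => lt_of_lt_of_le (h μ h1 h2) (min_le_left _ _)⟩
  by_contra hcon
  push_neg at hcon
  -- NSS data: a compact symmetric neighborhood of 1 with no nontrivial subgroups
  obtain ⟨V₀, hV₀n, hV₀⟩ := hNSS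
  obtain ⟨P₀, hP₀n, hP₀sub, hP₀cpt⟩ := local_compact_nhds hV₀n
  set P : Set G := P₀ ∩ P₀⁻¹ with hPdef
  have hPcpt : IsCompact P := hP₀cpt.inter_right hP₀cpt.isClosed.inv
  have hPn : P ∈ 𝓝 (1 : G) := Filter.inter_mem hP₀n (inv_mem_nhds_one G hP₀n)
  have hPsub : P ⊆ V₀ := Set.inter_subset_left.trans hP₀sub
  have hPsymm : P⁻¹ = P := by
    rw [hPdef, Set.inter_inv, inv_inv, Set.inter_comm]
  have h1P : (1 : G) ∈ P := mem_of_mem_nhds hPn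
  have hPNSS : ∀ H : Subgroup G, (H : Set G) ⊆ P → H = ⊥ :=
    fun H h => hV₀ H (h.trans hPsub)
  -- the Urysohn function F
  have h1int : (1 : G) ∈ interior P := mem_interior_iff_mem_nhds.mpr hPn
  obtain ⟨f, hf0, hf1, hficc⟩ := exists_continuous_zero_one_of_isCompact
    (isCompact_singleton : IsCompact {(1 : G)}) (isOpen_interior.isClosed_compl)
    (Set.disjoint_singleton_left.mpr (by simp only [Set.mem_compl_iff, not_not]; exact h1int))
  set F : G → ℝ := ⇑f with hFdef
  have hFcont : Continuous F := f.continuous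
  have hF0 : F 1 = 0 := hf0 rfl
  have hFicc : ∀ x, 0 ≤ F x ∧ F x ≤ 1 := fun x => hficc x
  have hFP : ∀ x ∉ interior P, F x = 1 := fun x hx => hf1 hx
  have hQsub : ∀ t : ℝ, t < 1 → {z | F z ≤ t} ⊆ interior P := by
    intro t ht z hz
    by_contra hc
    rw [Set.mem_setOf_eq, hFP z hc] at hz
    linarith
  have hQcpt : ∀ t : ℝ, t < 1 → IsCompact {z | F z ≤ t} := fun t ht =>
    IsCompact.of_isClosed_subset hPcpt (isClosed_le hFcont continuous_const)
      ((hQsub t ht).trans interior_subset)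
  -- the sequences of levels
  set a : ℕ → ℝ := fun i => 1/2 + 1/(i+3) with hadef
  have ha_pos : ∀ i : ℕ, (0:ℝ) < (i:ℝ) + 3 := fun i => by positivity
  have ha_anti : ∀ i j : ℕ, i < j → a j < a i := by
    intro i j hij
    have h1 : (1:ℝ)/(j+3) < 1/(i+3) := by
      apply one_div_lt_one_div_of_lt (ha_pos i)
      have : (i:ℝ) < j := by exact_mod_cast hij
      linarith
    show 1/2 + 1/((j:ℝ)+3) < 1/2 + 1/((i:ℝ)+3)
    linarith
  have ha_half : ∀ i : ℕ, 1/2 < a i := by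
    intro i
    have h1 : (0:ℝ) < 1/(i+3) := by positivity
    show (1:ℝ)/2 < 1/2 + 1/((i:ℝ)+3)
    linarith
  have ha_lt1 : ∀ i : ℕ, a i < 1 := by
    intro i
    have h3 : (3:ℝ) ≤ (i:ℝ) + 3 := by
      have := Nat.cast_nonneg (α := ℝ) i
      linarith
    have h1 : (1:ℝ)/((i:ℝ)+3) ≤ 1/3 :=
      one_div_le_one_div_of_le (by norm_num) h3
    show (1:ℝ)/2 + 1/((i:ℝ)+3) < 1
    linarith
  set tt : ℕ → ℝ := fun i => (a (i+1) + a i)/2 with httdef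
  set dd : ℕ → ℝ := fun i => (a i - tt i)/2 with hdddef
  have h_t_lb : ∀ i, a (i+1) < tt i := by
    intro i
    have h1 := ha_anti i (i+1) (by omega)
    show a (i+1) < (a (i+1) + a i)/2
    clear_value a tt dd
    linarith
  have h_t_ub2 : ∀ i, tt i < a i := by
    intro i
    have h1 := ha_anti i (i+1) (by omega)
    show (a (i+1) + a i)/2 < a i
    clear_value a tt dd
    linarith
  have hdd_pos : ∀ i, 0 < dd i := by
    intro i
    have h1 := h_t_ub2 i
    show (0:ℝ) < (a i - tt i)/2
    clear_value a tt dd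
    linarith
  have h_t_ub : ∀ i, tt i + dd i < a i := by
    intro i
    have h1 := h_t_ub2 i
    show tt i + (a i - tt i)/2 < a i
    clear_value a tt dd
    linarith
  have h_half_t : ∀ i, 1/2 < tt i := by
    intro i
    have h1 := ha_half (i+1)
    have h2 := h_t_lb i
    clear_value a tt dd
    linarith
  have h_tt_lt1 : ∀ i, tt i < 1 := fun i => lt_trans (h_t_ub2 i) (ha_lt1 i)
  have h_td_lt1 : ∀ i, tt i + dd i < 1 := fun i => lt_trans (h_t_ub i) (ha_lt1 i)
  clear_value a tt dd
  -- neighborhoods from uniform continuity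
  have hVk : ∀ i : ℕ, ∃ V ∈ 𝓝 (1 : G), ∀ x v, v ∈ V → |F (x*v) - F x| ≤ dd i := fun i =>
    unif_cont_of_one_off_compact F hFcont P hPcpt
      (fun x hx => hFP x (fun h => hx (interior_subset h))) (hdd_pos i)
  choose V hVn hVctrl using hVk
  -- the shrinking neighborhoods U n
  set U : ℕ → Set G := fun n => {z | F z < 1/2} ∩ ⋂ k ∈ Finset.range (n+1), V k with hUdef
  have hUn : ∀ n, U n ∈ 𝓝 (1 : G) := by
    intro n
    apply Filter.inter_mem
    · exact (isOpen_lt hFcont continuous_const).mem_nhds (by simp [hF0])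
    · exact (Filter.biInter_finset_mem _).mpr fun k _ => hVn k
  -- the bad measures
  have hbadex : ∀ n : ℕ, ∃ μ : ProbabilityMeasure (ClosedSubgroup G),
      (∀ g : G, μ.toMeasure.map (conjClosedSubgroup g) = μ.toMeasure) ∧
      μ.toMeasure {Γ : ClosedSubgroup G | DiscreteTopology Γ.toSubgroup} = 1 ∧
      ε' ≤ μ.toMeasure {Γ : ClosedSubgroup G | (Γ : Set G) ∩ U n ≠ {1}} := by
    intro n
    obtain ⟨μ, h1, h2, h3⟩ := hcon (U n) (hUn n)
    exact ⟨μ, h1, h2, h3⟩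
  choose μs hμinv hμdisc hμbad using hbadex
  -- cluster point
  have hmemS : ∀ n, μs n ∈ {μ : ProbabilityMeasure (ClosedSubgroup G) |
      (∀ g : G, μ.toMeasure.map (conjClosedSubgroup g) = μ.toMeasure) ∧
      μ.toMeasure {Γ : ClosedSubgroup G | DiscreteTopology Γ.toSubgroup} = 1} :=
    fun n => ⟨hμinv n, hμdisc n⟩
  obtain ⟨μlim, hμlimS, hclus⟩ := hcpt.exists_clusterPt
    (f := Filter.map μs Filter.atTop)
    (Filter.le_principal_iff.mpr (Filter.mem_map.mpr (Filter.Eventually.of_forall hmemS)))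
  obtain ⟨hμliminv, hμlimdisc⟩ := hμlimS
  -- compact annuli and their open neighborhoods
  set K : ℕ → Set G := fun i => {z | tt i ≤ F z} ∩ {z | F z ≤ tt i + dd i} with hKdef
  have hKcpt : ∀ i, IsCompact (K i) := by
    intro i
    apply IsCompact.of_isClosed_subset hPcpt
      ((isClosed_le continuous_const hFcont).inter (isClosed_le hFcont continuous_const))
    exact (Set.inter_subset_right.trans ((hQsub _ (h_td_lt1 i)).trans interior_subset))
  set Io : ℕ → Set G := fun i => F ⁻¹' (Set.Ioo (a (i+1)) (a i)) with hIodef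
  have hIoopen : ∀ i, IsOpen (Io i) := fun i => isOpen_Ioo.preimage hFcont
  have hKIo : ∀ i, K i ⊆ Io i := by
    rintro i z ⟨h1, h2⟩
    exact ⟨lt_of_lt_of_le (h_t_lb i) h1, lt_of_le_of_lt h2 (h_t_ub i)⟩
  have hIoP : ∀ i, Io i ⊆ P := by
    intro i z hz
    have : F z ≤ a i := le_of_lt hz.2
    exact interior_subset (hQsub (a i) (ha_lt1 i) this)
  -- Urysohn functions g i
  have hgex : ∀ i : ℕ, ∃ g : G → NNReal, Continuous g ∧ (∀ x, g x ≤ 1) ∧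
      (∀ b : NNReal, 0 < b → IsCompact {x | b ≤ g x}) ∧
      (∀ x ∈ K i, g x = 1) ∧ (∀ x ∉ Io i, g x = 0) := by
    intro i
    obtain ⟨f', hf'0, hf'1, hf'icc⟩ := exists_continuous_zero_one_of_isCompact
      (hKcpt i) (hIoopen i).isClosed_compl
      (disjoint_compl_right_iff_subset.mpr (hKIo i))
    have hcont : Continuous fun x => Real.toNNReal (1 - f' x) :=
      continuous_real_toNNReal.comp (continuous_const.sub f'.continuous)
    refine ⟨fun x => Real.toNNReal (1 - f' x), hcont, ?_, ?_, ?_, ?_⟩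
    · intro x
      have h1 := (hf'icc x).1
      exact Real.toNNReal_le_one.mpr (by linarith)
    · intro b hb
      apply IsCompact.of_isClosed_subset hPcpt (isClosed_le continuous_const hcont)
      intro x hx
      rw [Set.mem_setOf_eq] at hx
      have hx0 : 0 < Real.toNNReal (1 - f' x) := lt_of_lt_of_le hb hx
      have hx' : (0:ℝ) < 1 - f' x := Real.toNNReal_pos.mp hx0
      have hxIo : x ∈ Io i := by
        by_contra hc
        have h1 : f' x = 1 := by simpa using hf'1 hc
        rw [h1] at hx'
        linarith
      exact hIoP i hxIo
    · intro x hx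
      have h0 : f' x = 0 := by simpa using hf'0 hx
      simp only [h0, sub_zero, Real.toNNReal_one]
    · intro x hx
      have h1 : f' x = 1 := by simpa using hf'1 hx
      simp only [h1, sub_self, Real.toNNReal_zero]
  choose g hgcont hgle1 hgcpt hgK hgIo using hgex
  -- the test functions on the Chabauty space
  set hfun : ℕ → ClosedSubgroup G → NNReal := fun i Γ => sSup (g i '' (Γ : Set G)) with hhfdef
  have hhne : ∀ i (Γ : ClosedSubgroup G), (g i '' (Γ : Set G)).Nonempty :=
    fun i Γ => ⟨g i 1, ⟨1, Γ.toSubgroup.one_mem, rfl⟩⟩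
  have hhbdd : ∀ i (Γ : ClosedSubgroup G), BddAbove (g i '' (Γ : Set G)) :=
    fun i Γ => ⟨1, by rintro y ⟨x, _, rfl⟩; exact hgle1 i x⟩
  have hhcont : ∀ i, Continuous (hfun i) :=
    fun i => chab_continuous_sup (g i) (hgcont i) (hgle1 i) (hgcpt i)
  have hhle1 : ∀ i Γ, hfun i Γ ≤ 1 := by
    intro i Γ
    apply csSup_le (hhne i Γ)
    rintro y ⟨x, _, rfl⟩
    exact hgle1 i x
  set bcf : ℕ → BoundedContinuousFunction (ClosedSubgroup G) NNReal := fun i =>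
    BoundedContinuousFunction.mk ⟨hfun i, hhcont i⟩ (by
      refine ⟨1, fun Γ Γ' => ?_⟩
      rw [NNReal.dist_eq]
      rw [abs_sub_le_iff]
      constructor
      · have h1 : ((hfun i Γ : ℝ)) ≤ 1 := by exact_mod_cast hhle1 i Γ
        have h2 : (0:ℝ) ≤ (hfun i Γ' : ℝ) := (hfun i Γ').coe_nonneg
        linarith
      · have h1 : ((hfun i Γ' : ℝ)) ≤ 1 := by exact_mod_cast hhle1 i Γ'
        have h2 : (0:ℝ) ≤ (hfun i Γ : ℝ) := (hfun i Γ).coe_nonneg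
        linarith) with hbcfdef
  -- the closed events C and open events Gs
  set Cs : ℕ → Set (ClosedSubgroup G) := fun i => {Γ | ((Γ : Set G) ∩ K i).Nonempty} with hCsdef
  have hCmeas : ∀ i, MeasurableSet (Cs i) := by
    intro i
    have : Cs i = {Γ : ClosedSubgroup G | (Γ : Set G) ∩ K i = ∅}ᶜ := by
      ext Γ
      simp [hCsdef, Set.nonempty_iff_ne_empty]
    rw [this]
    exact (chab_open_avoids (hKcpt i)).measurableSet.compl
  set Gs : ℕ → Set (ClosedSubgroup G) := fun i => {Γ | ((Γ : Set G) ∩ Io i).Nonempty} with hGsdef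
  have hGmeas : ∀ i, MeasurableSet (Gs i) := fun i => (chab_open_meets (hIoopen i)).measurableSet
  -- inclusion of bad events into the annulus events
  have hincl : ∀ i n, i ≤ n →
      {Γ : ClosedSubgroup G | (Γ : Set G) ∩ U n ≠ {1}} ⊆ Cs i := by
    intro i n hin Γ hΓ
    have h1U : (1 : G) ∈ U n := mem_of_mem_nhds (hUn n)
    have h1mem : (1 : G) ∈ (Γ : Set G) ∩ U n := ⟨Γ.toSubgroup.one_mem, h1U⟩
    have hnsub : ¬((Γ : Set G) ∩ U n ⊆ {1}) := fun hsub =>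
      hΓ (Set.Subset.antisymm hsub (Set.singleton_subset_iff.mpr h1mem))
    obtain ⟨x, hx, hx1⟩ := Set.not_subset.mp hnsub
    rw [Set.mem_singleton_iff] at hx1
    have hxΓ : x ∈ Γ.toSubgroup := hx.1
    have hxU : x ∈ U n := hx.2
    have hxF : F x < 1/2 := hxU.1
    have hxV : x ∈ V i := by
      have := hxU.2
      rw [Set.mem_iInter₂] at this
      exact this i (Finset.mem_range.mpr (by omega))
    have hxQ : x ∈ {z | F z ≤ tt i} := le_of_lt (lt_trans hxF (h_half_t i))
    obtain ⟨j, hout, hinQ⟩ := escape_lemma P hPNSS hPsymm h1P {z | F z ≤ tt i}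
      ((hQsub (tt i) (h_tt_lt1 i)).trans interior_subset) hx1 hxQ
    show ((Γ : Set G) ∩ K i).Nonempty
    have hxΓ' : x ∈ Γ.toSubgroup := hxΓ
    have hpow : x ^ (j + 2) ∈ (Γ : Set G) := Γ.toSubgroup.pow_mem hxΓ' (j+2)
    have hout' : ¬ (F (x ^ (j + 2)) ≤ tt i) := hout
    refine ⟨x ^ (j + 2), hpow, ?_, ?_⟩
    · show tt i ≤ F (x ^ (j + 2))
      exact le_of_lt (not_le.mp hout')
    · have hctrl := hVctrl i (x ^ (j+1)) x hxV
      rw [← pow_succ] at hctrl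
      have h2 : F (x ^ (j + 2)) - F (x ^ (j+1)) ≤ dd i := le_trans (le_abs_self _) hctrl
      have h3 : F (x ^ (j+1)) ≤ tt i := hinQ
      simp only [Set.mem_setOf_eq]
      linarith
  -- lower bound on integrals against the bad measures
  have hlbn : ∀ i n, i ≤ n →
      ε' ≤ ∫⁻ Γ, ((hfun i Γ : NNReal) : ENNReal) ∂(μs n).toMeasure := by
    intro i n hin
    calc ε' ≤ (μs n).toMeasure {Γ : ClosedSubgroup G | (Γ : Set G) ∩ U n ≠ {1}} := hμbad n
      _ ≤ (μs n).toMeasure (Cs i) := measure_mono (hincl i n hin)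
      _ = ∫⁻ Γ, (Cs i).indicator 1 Γ ∂(μs n).toMeasure := (lintegral_indicator_one (hCmeas i)).symm
      _ ≤ ∫⁻ Γ, ((hfun i Γ : NNReal) : ENNReal) ∂(μs n).toMeasure := by
          apply lintegral_mono
          intro Γ
          rw [Set.indicator_apply]
          by_cases hΓ : Γ ∈ Cs i
          · rw [if_pos hΓ]
            obtain ⟨x, hxΓ, hxK⟩ := hΓ
            have h1 : (1 : NNReal) ≤ hfun i Γ := by
              rw [← hgK i x hxK]
              exact le_csSup (hhbdd i Γ) ⟨x, hxΓ, rfl⟩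
            show (1 : ENNReal) ≤ ((hfun i Γ : NNReal) : ENNReal)
            exact ENNReal.one_le_coe_iff.mpr h1
          · rw [if_neg hΓ]
            exact zero_le
  -- lower bound on the integral against the limit measure
  have hlblim : ∀ i, ε' ≤ ∫⁻ Γ, ((hfun i Γ : NNReal) : ENNReal) ∂μlim.toMeasure := by
    intro i
    by_contra hlt
    rw [not_le] at hlt
    set εN : NNReal := ε'.toNNReal with hεNdef
    have hεN : (εN : ENNReal) = ε' := ENNReal.coe_toNNReal hε'top
    have hOopen : IsOpen {ν : ProbabilityMeasure (ClosedSubgroup G) |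
        ν.toFiniteMeasure.testAgainstNN (bcf i) < εN} := by
      have hc : Continuous fun ν : ProbabilityMeasure (ClosedSubgroup G) =>
          ν.toFiniteMeasure.testAgainstNN (bcf i) :=
        (FiniteMeasure.continuous_testAgainstNN_eval (bcf i)).comp
          ProbabilityMeasure.toFiniteMeasure_continuous
      exact isOpen_Iio.preimage hc
    have hint_eq : ∀ ν : ProbabilityMeasure (ClosedSubgroup G),
        ((ν.toFiniteMeasure.testAgainstNN (bcf i) : NNReal) : ENNReal)
          = ∫⁻ Γ, ((hfun i Γ : NNReal) : ENNReal) ∂ν.toMeasure := by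
      intro ν
      rw [FiniteMeasure.testAgainstNN_coe_eq]
      rfl
    have hμlimO : μlim ∈ {ν : ProbabilityMeasure (ClosedSubgroup G) |
        ν.toFiniteMeasure.testAgainstNN (bcf i) < εN} := by
      rw [Set.mem_setOf_eq, ← ENNReal.coe_lt_coe, hεN, hint_eq]
      exact hlt
    have hsmem : {ν : ProbabilityMeasure (ClosedSubgroup G) | ∃ n, i ≤ n ∧ μs n = ν}
        ∈ Filter.map μs Filter.atTop := by
      rw [Filter.mem_map]
      exact Filter.mem_of_superset (Filter.mem_atTop i) (fun m hm => ⟨m, hm, rfl⟩)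
    obtain ⟨ν, hνO, n, hni, rfl⟩ :=
      clusterPt_iff_nonempty.mp hclus (hOopen.mem_nhds hμlimO) hsmem
    have hcontr := hlbn i n hni
    rw [← hint_eq (μs n), ← hεN] at hcontr
    exact absurd hνO (not_lt.mpr (ENNReal.coe_le_coe.mp hcontr))
  -- the limit measure gives mass at least ε' to each open event Gs i
  have hμG : ∀ i, ε' ≤ μlim.toMeasure (Gs i) := by
    intro i
    refine le_trans (hlblim i) ?_
    calc ∫⁻ Γ, ((hfun i Γ : NNReal) : ENNReal) ∂μlim.toMeasure
        ≤ ∫⁻ Γ, (Gs i).indicator 1 Γ ∂μlim.toMeasure := by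
          apply lintegral_mono
          intro Γ
          rw [Set.indicator_apply]
          by_cases hΓ : Γ ∈ Gs i
          · rw [if_pos hΓ]
            show ((hfun i Γ : NNReal) : ENNReal) ≤ (1 : ENNReal)
            exact ENNReal.coe_le_one_iff.mpr (hhle1 i Γ)
          · rw [if_neg hΓ]
            show ((hfun i Γ : NNReal) : ENNReal) ≤ 0
            have hzero : hfun i Γ = 0 := by
              have himg : g i '' (Γ : Set G) = {0} := by
                apply Set.Subset.antisymm
                · rintro y ⟨x, hxΓ, rfl⟩
                  have hxnot : x ∉ Io i := by
                    intro hxIo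
                    exact hΓ ⟨x, hxΓ, hxIo⟩
                  rw [hgIo i x hxnot]
                  rfl
                · intro y hy
                  rw [Set.mem_singleton_iff] at hy
                  subst hy
                  have h1not : (1 : G) ∉ Io i := by
                    intro h1Io
                    have := h1Io.1
                    rw [hF0] at this
                    have := ha_half (i+1)
                    linarith
                  exact ⟨1, Γ.toSubgroup.one_mem, hgIo i 1 h1not⟩
              rw [hhfdef]
              simp only []
              rw [himg, csSup_singleton]
            rw [hzero]
            simp
      _ = μlim.toMeasure (Gs i) := lintegral_indicator_one (hGmeas i)
  -- the counting sets
  set A : ℕ → Set (ClosedSubgroup G) := fun j =>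
    ⋃ (s : Finset ℕ) (_ : s.card = j), ⋂ i ∈ s, Gs i with hAdef
  have hAmeas : ∀ j, MeasurableSet (A j) := by
    intro j
    apply MeasurableSet.iUnion
    intro s
    apply MeasurableSet.iUnion
    intro _
    exact MeasurableSet.biInter s.countable_toSet (fun i _ => hGmeas i)
  have hAanti : Antitone A := by
    intro j j' hjj' Γ hΓ
    rw [hAdef, Set.mem_iUnion] at hΓ
    obtain ⟨s, hs⟩ := hΓ
    rw [Set.mem_iUnion] at hs
    obtain ⟨hcard, hΓs⟩ := hs
    obtain ⟨t, hts, htcard⟩ := Finset.exists_subset_card_eq (hcard ▸ hjj')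
    rw [hAdef, Set.mem_iUnion]
    refine ⟨t, Set.mem_iUnion.mpr ⟨htcard, ?_⟩⟩
    rw [Set.mem_iInter₂] at hΓs ⊢
    exact fun i hi => hΓs i (hts hi)
  -- discrete groups lie in only finitely many Gs i
  have hdisjoint : ∀ Γ : ClosedSubgroup G, DiscreteTopology Γ.toSubgroup →
      Γ ∉ ⋂ j, A j := by
    intro Γ hdisc hmem
    rw [Set.mem_iInter] at hmem
    have hTinf : {i : ℕ | Γ ∈ Gs i}.Infinite := by
      intro hfin
      have h := hmem (hfin.toFinset.card + 1)
      rw [hAdef, Set.mem_iUnion] at h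
      obtain ⟨s, hs⟩ := h
      rw [Set.mem_iUnion] at hs
      obtain ⟨hcard, hΓs⟩ := hs
      rw [Set.mem_iInter₂] at hΓs
      have hsub : s ⊆ hfin.toFinset := fun i hi => hfin.mem_toFinset.mpr (hΓs i hi)
      have := Finset.card_le_card hsub
      omega
    have : Infinite {i : ℕ // Γ ∈ Gs i} := Set.infinite_coe_iff.mpr hTinf
    have hxex : ∀ i : {i : ℕ // Γ ∈ Gs i}, ∃ x : G, x ∈ (Γ : Set G) ∧ x ∈ Io i.1 :=
      fun i => i.2
    choose x hxΓ hxIo using hxex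
    have hΓPinf : ((Γ : Set G) ∩ P).Infinite := by
      apply Set.infinite_of_injective_forall_mem (f := x)
      · intro i i' hii'
        by_contra hne
        have hne' : i.1 ≠ i'.1 := fun h => hne (Subtype.ext h)
        rcases Nat.lt_or_ge i.1 i'.1 with hlt | hge
        · have h1 : F (x i') < a i'.1 := (hxIo i').2
          have h2 : a (i.1+1) < F (x i) := (hxIo i).1
          have h3 : a i'.1 ≤ a (i.1 + 1) := by
            rcases Nat.lt_or_ge (i.1+1) i'.1 with h | h
            · exact le_of_lt (ha_anti _ _ h)
            · have : i'.1 = i.1 + 1 := by omega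
              rw [this]
          rw [hii'] at h2
          linarith
        · have hlt' : i'.1 < i.1 := by omega
          have h1 : F (x i) < a i.1 := (hxIo i).2
          have h2 : a (i'.1+1) < F (x i') := (hxIo i').1
          have h3 : a i.1 ≤ a (i'.1 + 1) := by
            rcases Nat.lt_or_ge (i'.1+1) i.1 with h | h
            · exact le_of_lt (ha_anti _ _ h)
            · have : i.1 = i'.1 + 1 := by omega
              rw [this]
          rw [hii'] at h1
          linarith
      · intro i
        exact ⟨hxΓ i, hIoP i.1 (hxIo i)⟩
    have hcptΓP : IsCompact ((Γ : Set G) ∩ P) := hPcpt.inter_left Γ.isClosed'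
    have hdset : DiscreteTopology ((Γ : Set G) : Type _) := hdisc
    have hd2 : DiscreteTopology (((Γ : Set G) ∩ P : Set G) : Type _) :=
      DiscreteTopology.of_subset hdset Set.inter_subset_left
    exact hΓPinf (hcptΓP.finite (isDiscrete_iff_discreteTopology.mpr hd2))
  -- the intersection of the A j is null
  have hA0 : μlim.toMeasure (⋂ j, A j) = 0 := by
    by_contra hne
    have hmeas : MeasurableSet (⋂ j, A j) := MeasurableSet.iInter hAmeas
    have hsub2 : {Γ : ClosedSubgroup G | DiscreteTopology Γ.toSubgroup} ⊆ (⋂ j, A j)ᶜ :=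
      fun Γ hd => hdisjoint Γ hd
    have hge : (1 : ENNReal) ≤ μlim.toMeasure ((⋂ j, A j)ᶜ) :=
      hμlimdisc ▸ measure_mono hsub2
    have hcompl : μlim.toMeasure ((⋂ j, A j)ᶜ) = 1 - μlim.toMeasure (⋂ j, A j) := by
      rw [measure_compl hmeas (measure_ne_top _ _)]
      simp [measure_univ]
    rw [hcompl] at hge
    have hlt : (1:ENNReal) - μlim.toMeasure (⋂ j, A j) < 1 :=
      ENNReal.sub_lt_self ENNReal.one_ne_top one_ne_zero hne
    exact absurd hge (not_le.mpr hlt)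
  -- continuity from above gives a j₀ with small measure
  have hhalf0 : (0 : ENNReal) < ε' / 2 := ENNReal.div_pos hε'0.ne' ENNReal.ofNat_ne_top
  have htend := tendsto_measure_iInter_atTop (μ := μlim.toMeasure)
    (fun j => (hAmeas j).nullMeasurableSet) hAanti ⟨0, measure_ne_top _ _⟩
  rw [hA0] at htend
  obtain ⟨j₀, hj₀⟩ := (htend.eventually_lt_const hhalf0).exists
  -- the key counting estimate
  have hkey : ∀ k : ℕ, (k : ENNReal) * ε' ≤ (j₀ : ENNReal) + (k : ENNReal) * (ε' / 2) := by
    intro k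
    have hstep1 : (k : ENNReal) * ε' ≤ ∑ i ∈ Finset.range k, μlim.toMeasure (Gs i) := by
      calc (k : ENNReal) * ε' = ∑ _i ∈ Finset.range k, ε' := by
            rw [Finset.sum_const, Finset.card_range, nsmul_eq_mul]
        _ ≤ ∑ i ∈ Finset.range k, μlim.toMeasure (Gs i) :=
            Finset.sum_le_sum (fun i _ => hμG i)
    have hstep2 : ∑ i ∈ Finset.range k, μlim.toMeasure (Gs i)
        = ∫⁻ Γ, ∑ i ∈ Finset.range k, (Gs i).indicator 1 Γ ∂μlim.toMeasure := by
      rw [lintegral_finset_sum _ (fun i _ => measurable_one.indicator (hGmeas i))]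
      exact Finset.sum_congr rfl (fun i _ => (lintegral_indicator_one (hGmeas i)).symm)
    have hptwise : ∀ Γ : ClosedSubgroup G,
        ∑ i ∈ Finset.range k, (Gs i).indicator (1 : ClosedSubgroup G → ENNReal) Γ
        ≤ (j₀ : ENNReal) + (A j₀).indicator (fun _ => (k : ENNReal)) Γ := by
      intro Γ
      have hsum : ∑ i ∈ Finset.range k, (Gs i).indicator (1 : ClosedSubgroup G → ENNReal) Γ
          = (((Finset.range k).filter (fun i => Γ ∈ Gs i)).card : ENNReal) := by
        rw [Finset.card_filter]
        rw [Nat.cast_sum]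
        apply Finset.sum_congr rfl
        intro i _
        rw [Set.indicator_apply]
        by_cases h : Γ ∈ Gs i <;> simp [h]
      rw [hsum, Set.indicator_apply]
      by_cases hΓA : Γ ∈ A j₀
      · rw [if_pos hΓA]
        have h1 : ((Finset.range k).filter (fun i => Γ ∈ Gs i)).card ≤ k := by
          calc _ ≤ (Finset.range k).card := Finset.card_filter_le _ _
            _ = k := Finset.card_range k
        calc (((Finset.range k).filter (fun i => Γ ∈ Gs i)).card : ENNReal)
            ≤ (k : ENNReal) := by exact_mod_cast h1
          _ ≤ (j₀ : ENNReal) + (k : ENNReal) := le_add_self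
      · rw [if_neg hΓA]
        rw [add_zero]
        have hcard : ((Finset.range k).filter (fun i => Γ ∈ Gs i)).card ≤ j₀ := by
          by_contra hc
          push_neg at hc
          obtain ⟨t, hts, htcard⟩ := Finset.exists_subset_card_eq (le_of_lt hc)
          apply hΓA
          rw [hAdef, Set.mem_iUnion]
          refine ⟨t, Set.mem_iUnion.mpr ⟨htcard, ?_⟩⟩
          rw [Set.mem_iInter₂]
          intro i hi
          exact (Finset.mem_filter.mp (hts hi)).2
        exact_mod_cast hcard
    have hstep3 : ∫⁻ Γ, ∑ i ∈ Finset.range k, (Gs i).indicator 1 Γ ∂μlim.toMeasure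
        ≤ (j₀ : ENNReal) + (k : ENNReal) * μlim.toMeasure (A j₀) := by
      calc ∫⁻ Γ, ∑ i ∈ Finset.range k, (Gs i).indicator 1 Γ ∂μlim.toMeasure
          ≤ ∫⁻ Γ, ((j₀ : ENNReal) + (A j₀).indicator (fun _ => (k : ENNReal)) Γ)
              ∂μlim.toMeasure := lintegral_mono hptwise
        _ = (j₀ : ENNReal) + (k : ENNReal) * μlim.toMeasure (A j₀) := by
            rw [lintegral_add_left measurable_const]
            rw [lintegral_const]
            rw [lintegral_indicator_const (hAmeas j₀)]
            simp [measure_univ]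
    calc (k : ENNReal) * ε' ≤ ∑ i ∈ Finset.range k, μlim.toMeasure (Gs i) := hstep1
      _ = _ := hstep2
      _ ≤ (j₀ : ENNReal) + (k : ENNReal) * μlim.toMeasure (A j₀) := hstep3
      _ ≤ (j₀ : ENNReal) + (k : ENNReal) * (ε' / 2) :=
          add_le_add_right (mul_le_mul_right hj₀.le _) _
  -- derive the contradiction
  have hc0 : ε' / 2 ≠ 0 := hhalf0.ne'
  have hctop : ε' / 2 ≠ ⊤ := by
    apply ne_top_of_le_ne_top hε'top
    exact ENNReal.half_le_self
  have hcancel : ∀ k : ℕ, (k : ENNReal) * (ε' / 2) ≤ (j₀ : ENNReal) := by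
    intro k
    have h := hkey k
    rw [show (k : ENNReal) * ε' = (k : ENNReal) * (ε'/2) + (k : ENNReal) * (ε'/2) by
      rw [← mul_add, ENNReal.add_halves]] at h
    have hfin : (k : ENNReal) * (ε' / 2) ≠ ⊤ :=
      ENNReal.mul_ne_top (ENNReal.natCast_ne_top k) hctop
    exact (ENNReal.add_le_add_iff_right hfin).mp h
  obtain ⟨k, hk⟩ := ENNReal.exists_nat_gt
    (ENNReal.div_lt_top (ENNReal.natCast_ne_top j₀) hc0).ne
  have hcontr : (j₀ : ENNReal) < (k : ENNReal) * (ε' / 2) := by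
    have h2 : (j₀ : ENNReal) = ((j₀ : ENNReal) / (ε' / 2)) * (ε' / 2) :=
      (ENNReal.div_mul_cancel hc0 hctop).symm
    rw [h2]
    exact (ENNReal.mul_lt_mul_iff_left hc0 hctop).mpr hk
  exact absurd (hcancel k) (not_le.mpr hcontr)
end

section
/- Let G be a locally compact σ-compact group such that IRS_d(G) is weakly uniformly discrete. Then there is an identity neighbourhood Ω ⊆ G such that every lattice Γ ≤ G has a conjugate gΓg⁻¹ with gΓg⁻¹ ∩ Ω = {1} (Kazhdan–Margulis theorem). -/
open MeasureTheory Topology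

section Aux

variable {G : Type*} [Group G] [TopologicalSpace G] [IsTopologicalGroup G]

lemma KM.mem_conj (g x : G) (H : Subgroup G) :
    x ∈ H.map (MulAut.conj g).toMonoidHom ↔ g⁻¹ * x * g ∈ H := by
  rw [Subgroup.mem_map]
  constructor
  · rintro ⟨y, hy, rfl⟩
    simpa [MulAut.conj_apply, mul_assoc] using hy
  · intro h
    exact ⟨g⁻¹ * x * g, h, by simp [MulAut.conj_apply, mul_assoc]⟩

lemma KM.mem_conjClosedSubgroup (g x : G) (H : ClosedSubgroup G) :
    x ∈ (conjClosedSubgroup g H : Set G) ↔ g⁻¹ * x * g ∈ H.toSubgroup :=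
  KM.mem_conj g x H.toSubgroup

lemma KM.conj_conj (g h : G) (H : ClosedSubgroup G) :
    conjClosedSubgroup g (conjClosedSubgroup h H) = conjClosedSubgroup (g * h) H := by
  apply ClosedSubgroup.toSubgroup_injective
  ext x
  show x ∈ (conjClosedSubgroup h H).toSubgroup.map _ ↔ _
  rw [KM.mem_conj]
  rw [show (g⁻¹ * x * g ∈ (conjClosedSubgroup h H).toSubgroup) ↔ _ from
    KM.mem_conj h _ H.toSubgroup]
  rw [show (x ∈ (conjClosedSubgroup (g*h) H).toSubgroup) ↔ _ from KM.mem_conj (g*h) x H.toSubgroup]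
  simp [mul_assoc]

lemma KM.conj_of_mem {γ : G} {H : ClosedSubgroup G} (hγ : γ ∈ H.toSubgroup) :
    conjClosedSubgroup γ H = H := by
  apply ClosedSubgroup.toSubgroup_injective
  ext x
  rw [show (x ∈ (conjClosedSubgroup γ H).toSubgroup) ↔ _ from KM.mem_conj γ x H.toSubgroup]
  constructor
  · intro h
    have := mul_mem (mul_mem hγ h) (inv_mem hγ)
    simpa [mul_assoc] using this
  · intro h
    exact mul_mem (mul_mem (inv_mem hγ) h) hγ

/-- Conjugation is continuous in the Chabauty topology. -/
lemma KM.continuous_conjClosedSubgroup (g : G) :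
    Continuous (conjClosedSubgroup g : ClosedSubgroup G → ClosedSubgroup G) := by
  rw [continuous_generateFrom_iff]
  rintro s (⟨K, hK, rfl⟩ | ⟨U, hU, rfl⟩)
  · have hpre : (conjClosedSubgroup g) ⁻¹' {H : ClosedSubgroup G | (H : Set G) ∩ K = ∅}
        = {H : ClosedSubgroup G | (H : Set G) ∩ ((fun x => g⁻¹ * x * g) '' K) = ∅} := by
      ext H
      simp only [Set.mem_preimage, Set.mem_setOf_eq, Set.eq_empty_iff_forall_notMem]
      constructor
      · rintro h y ⟨hyH, k, hkK, rfl⟩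
        refine h (g * (g⁻¹ * k * g) * g⁻¹) ⟨?_, ?_⟩
        · rw [KM.mem_conjClosedSubgroup]
          have h' : g⁻¹ * (k * g) ∈ H := by simpa [mul_assoc] using hyH
          simp [mul_assoc]
          exact h'
        · simpa [mul_assoc] using hkK
      · rintro h x ⟨hxH, hxK⟩
        rw [KM.mem_conjClosedSubgroup] at hxH
        exact h (g⁻¹ * x * g) ⟨hxH, ⟨x, hxK, rfl⟩⟩
    rw [hpre]
    exact TopologicalSpace.isOpen_generateFrom_of_mem (Or.inl ⟨_,
      hK.image (by continuity), rfl⟩)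
  · have hpre : (conjClosedSubgroup g) ⁻¹' {H : ClosedSubgroup G | ((H : Set G) ∩ U).Nonempty}
        = {H : ClosedSubgroup G | ((H : Set G) ∩ ((fun x => g⁻¹ * x * g) '' U)).Nonempty} := by
      ext H
      simp only [Set.mem_preimage, Set.mem_setOf_eq]
      constructor
      · rintro ⟨x, hxH, hxU⟩
        rw [KM.mem_conjClosedSubgroup] at hxH
        exact ⟨g⁻¹ * x * g, hxH, ⟨x, hxU, rfl⟩⟩
      · rintro ⟨y, hyH, u, huU, rfl⟩
        refine ⟨g * (g⁻¹ * u * g) * g⁻¹, ?_, by simpa [mul_assoc] using huU⟩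
        rw [KM.mem_conjClosedSubgroup]
        have h' : g⁻¹ * (u * g) ∈ H := by simpa [mul_assoc] using hyH
        simp [mul_assoc]
        exact h'
    rw [hpre]
    refine TopologicalSpace.isOpen_generateFrom_of_mem (Or.inr ⟨_, ?_, rfl⟩)
    have : (fun x => g⁻¹ * x * g) '' U = (· * g) '' ((g⁻¹ * ·) '' U) := by
      rw [Set.image_image]
    rw [this]
    exact (isOpenMap_mul_right g) _ ((isOpenMap_mul_left g⁻¹) U hU)

/-- The orbit map `g ↦ gHg⁻¹` is continuous in the Chabauty topology. -/
lemma KM.continuous_orbit (H : ClosedSubgroup G) :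
    Continuous (fun g => conjClosedSubgroup g H) := by
  rw [continuous_generateFrom_iff]
  rintro s (⟨K, hK, rfl⟩ | ⟨U, hU, rfl⟩)
  · rw [isOpen_iff_mem_nhds]
    intro g₀ hg₀
    simp only [Set.mem_preimage, Set.mem_setOf_eq] at hg₀
    have hO : IsOpen {p : G × G | p.1⁻¹ * p.2 * p.1 ∈ ((H : Set G))ᶜ} := by
      have hc : Continuous (fun p : G × G => p.1⁻¹ * p.2 * p.1) := by continuity
      exact (H.isClosed'.isOpen_compl).preimage hc
    have hsub : ({g₀} : Set G) ×ˢ K ⊆ {p : G × G | p.1⁻¹ * p.2 * p.1 ∈ ((H : Set G))ᶜ} := by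
      rintro ⟨a, k⟩ ⟨ha, hk⟩
      simp only [Set.mem_singleton_iff] at ha
      subst ha
      intro hmem
      have : k ∈ (conjClosedSubgroup a H : Set G) ∩ K := by
        refine ⟨?_, hk⟩
        rw [KM.mem_conjClosedSubgroup]
        exact hmem
      rw [hg₀] at this
      exact this
    obtain ⟨u, v, hu, hv, hgu, hKv, huv⟩ :=
      generalized_tube_lemma isCompact_singleton hK hO hsub
    refine Filter.mem_of_superset (hu.mem_nhds (hgu rfl)) ?_
    intro g hg
    simp only [Set.mem_preimage, Set.mem_setOf_eq]
    rw [Set.eq_empty_iff_forall_notMem]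
    rintro x ⟨hxH, hxK⟩
    rw [KM.mem_conjClosedSubgroup] at hxH
    exact huv (Set.mk_mem_prod hg (hKv hxK)) hxH
  · have hpre : (fun g => conjClosedSubgroup g H) ⁻¹'
        {H' : ClosedSubgroup G | ((H' : Set G) ∩ U).Nonempty}
        = ⋃ γ : H.toSubgroup, {g : G | g * (γ : G) * g⁻¹ ∈ U} := by
      ext g
      simp only [Set.mem_preimage, Set.mem_setOf_eq, Set.mem_iUnion]
      constructor
      · rintro ⟨x, hxH, hxU⟩
        rw [KM.mem_conjClosedSubgroup] at hxH
        refine ⟨⟨g⁻¹ * x * g, hxH⟩, ?_⟩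
        simpa [mul_assoc] using hxU
      · rintro ⟨⟨γ, hγ⟩, hgU⟩
        refine ⟨g * γ * g⁻¹, ?_, hgU⟩
        rw [KM.mem_conjClosedSubgroup]
        simpa [mul_assoc] using hγ
    rw [hpre]
    exact isOpen_iUnion fun γ => hU.preimage (by continuity)

/-- The conjugate of a discrete subgroup is discrete. -/
lemma KM.discrete_conj (Γ : Subgroup G) [DiscreteTopology Γ] (g : G) :
    DiscreteTopology (Γ.map (MulAut.conj g).toMonoidHom) := by
  let e : (Γ.map (MulAut.conj g).toMonoidHom) ≃ₜ Γ :=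
    { toFun := fun x => ⟨g⁻¹ * (x : G) * g, (KM.mem_conj g _ Γ).1 x.2⟩
      invFun := fun x => ⟨g * (x : G) * g⁻¹, by
        rw [KM.mem_conj]
        simpa [mul_assoc] using x.2⟩
      left_inv := fun x => by
        ext
        simp [mul_assoc]
      right_inv := fun x => by
        ext
        simp [mul_assoc]
      continuous_toFun := by
        apply Continuous.subtype_mk
        exact (continuous_const.mul continuous_subtype_val).mul continuous_const
      continuous_invFun := by
        apply Continuous.subtype_mk
        exact (continuous_const.mul continuous_subtype_val).mul continuous_const }
  exact e.isEmbedding.discreteTopology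

/-- A discrete subgroup of a Hausdorff topological group is closed. -/
lemma KM.isClosed_of_discrete [T2Space G] (Γ : Subgroup G) [DiscreteTopology Γ] :
    IsClosed (Γ : Set G) := by
  haveI : DiscreteTopology ((Γ : Set G) : Set G) := ‹DiscreteTopology Γ›
  obtain ⟨U, hU, hUΓ⟩ :=
    nhds_inter_eq_singleton_of_mem_discrete (s := (Γ : Set G)) (x := (1 : G))
      (isDiscrete_iff_discreteTopology.mpr this) Γ.one_mem
  obtain ⟨V, hVo, hV1, hVV⟩ := exists_open_nhds_one_mul_subset hU
  rw [← closure_subset_iff_isClosed]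
  intro x hx
  set W := V ∩ V⁻¹ with hW
  have hWo : IsOpen W := hVo.inter hVo.inv
  have hO : IsOpen ((fun y => x⁻¹ * y) ⁻¹' W) := hWo.preimage (continuous_const.mul continuous_id)
  have hxO : x ∈ (fun y => x⁻¹ * y) ⁻¹' W := by
    simp only [Set.mem_preimage, inv_mul_cancel]
    exact ⟨hV1, by simp [hV1]⟩
  obtain ⟨γ, hγO, hγΓ⟩ := mem_closure_iff.1 hx _ hO hxO
  have hsub : ((fun y => x⁻¹ * y) ⁻¹' W) ∩ (Γ : Set G) ⊆ {γ} := by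
    rintro y ⟨hyO, hyΓ⟩
    have h1 : γ⁻¹ * y = (x⁻¹ * γ)⁻¹ * (x⁻¹ * y) := by group
    have hγV : (x⁻¹ * γ)⁻¹ ∈ V := hγO.2
    have hyV : x⁻¹ * y ∈ V := hyO.1
    have hU' : γ⁻¹ * y ∈ U := by
      rw [h1]
      exact hVV (Set.mul_mem_mul hγV hyV)
    have : γ⁻¹ * y ∈ U ∩ (Γ : Set G) := ⟨hU', mul_mem (inv_mem hγΓ) hyΓ⟩
    rw [hUΓ] at this
    have h1' : γ⁻¹ * y = 1 := this
    have h2 : γ = y := inv_mul_eq_one.1 h1'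
    exact Set.mem_singleton_iff.2 h2.symm
  have hx2 : x ∈ closure (((fun y => x⁻¹ * y) ⁻¹' W) ∩ (Γ : Set G)) :=
    hO.inter_closure ⟨hxO, hx⟩
  have : x ∈ ({γ} : Set G) := by
    have := closure_mono hsub hx2
    rwa [closure_singleton] at this
  rw [Set.mem_singleton_iff] at this
  rw [this]
  exact hγΓ

end Aux

/-- Kazhdan–Margulis: if the discrete IRS's of `G` are weakly uniformly discrete, then there is an
identity neighbourhood `Ω` such that every lattice has a conjugate meeting `Ω` trivially. -/
theorem kazhdan_margulis {G : Type*} [Group G] [TopologicalSpace G] [IsTopologicalGroup G] [T2Space G]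
    [LocallyCompactSpace G] [SigmaCompactSpace G]
    [MeasurableSpace G] [BorelSpace G]
    (hWUD : ∀ ε : ENNReal, 0 < ε → ∃ U ∈ 𝓝 (1 : G), ∀ μ : Measure (ClosedSubgroup G),
      IsProbabilityMeasure μ →
      (∀ g : G, μ.map (conjClosedSubgroup g) = μ) →
      μ {Γ : ClosedSubgroup G | DiscreteTopology Γ.toSubgroup} = 1 →
      μ {Γ : ClosedSubgroup G | (Γ : Set G) ∩ U ≠ {1}} < ε) :
    ∃ Ω ∈ 𝓝 (1 : G), ∀ Γ : Subgroup G, ∀ _ : DiscreteTopology Γ,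
      (∃ ν : Measure (G ⧸ Γ), IsProbabilityMeasure ν ∧ ∀ g : G, ν.map (fun x => g • x) = ν) →
      ∃ g : G, ((Γ.map (MulAut.conj g).toMonoidHom : Subgroup G) : Set G) ∩ Ω = {1} := by
  obtain ⟨Ω, hΩ, hKey⟩ := hWUD 1 one_pos
  refine ⟨Ω, hΩ, ?_⟩
  rintro Γ hΓ ⟨ν, hν, hνinv⟩
  haveI := hΓ
  have hclosed : IsClosed (Γ : Set G) := KM.isClosed_of_discrete Γ
  set Γc : ClosedSubgroup G := ⟨Γ, hclosed⟩ with hΓc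
  set F : G → ClosedSubgroup G := fun g => conjClosedSubgroup g Γc with hF
  have hFcont : Continuous F := KM.continuous_orbit Γc
  have hFmeas : Measurable F := hFcont.measurable
  have hwd : ∀ a b : G, @Setoid.r _ (QuotientGroup.leftRel Γ) a b → F a = F b := by
    intro a b hab
    rw [QuotientGroup.leftRel_apply] at hab
    have hb : b = a * (a⁻¹ * b) := by group
    calc F a = conjClosedSubgroup a (conjClosedSubgroup (a⁻¹ * b) Γc) := by
          rw [KM.conj_of_mem (show a⁻¹ * b ∈ Γc.toSubgroup from hab)]
      _ = conjClosedSubgroup (a * (a⁻¹ * b)) Γc := KM.conj_conj _ _ _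
      _ = F b := by simp only [hF]; rw [← hb]
  set f : G ⧸ Γ → ClosedSubgroup G := fun q => Quotient.liftOn' q F hwd with hf
  have hfmk : ∀ a : G, f (QuotientGroup.mk a) = F a := fun a => rfl
  have hfm : Measurable f := by
    have : Measurable (f ∘ Quotient.mk'') := hFmeas
    exact measurable_from_quotient.2 this
  set μ : Measure (ClosedSubgroup G) := ν.map f with hμ
  have hμprob : IsProbabilityMeasure μ := Measure.isProbabilityMeasure_map hfm.aemeasurable
  have hsm : ∀ g : G, Measurable (fun x : G ⧸ Γ => g • x) := by
    intro g
    apply measurable_from_quotient.2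
    have : ((fun x : G ⧸ Γ => g • x) ∘ Quotient.mk'') = fun a => Quotient.mk'' (g * a) := by
      funext a
      rfl
    rw [this]
    exact measurable_quotient_mk''.comp (measurable_const_mul g)
  have hμinv : ∀ g : G, μ.map (conjClosedSubgroup g) = μ := by
    intro g
    have hcomp : (conjClosedSubgroup g) ∘ f = f ∘ (fun x => g • x) := by
      funext q
      induction q using Quotient.inductionOn' with
      | h a =>
        show conjClosedSubgroup g (F a) = f (g • QuotientGroup.mk a)
        have : g • (QuotientGroup.mk a : G ⧸ Γ) = QuotientGroup.mk (g * a) := rfl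
        rw [this, hfmk]
        exact KM.conj_conj g a Γc
    rw [hμ, Measure.map_map (KM.continuous_conjClosedSubgroup g).measurable hfm, hcomp,
      ← Measure.map_map hfm (hsm g), hνinv g]
  have hμdisc : μ {Γ' : ClosedSubgroup G | DiscreteTopology Γ'.toSubgroup} = 1 := by
    refine le_antisymm prob_le_one ?_
    have huniv : f ⁻¹' {Γ' : ClosedSubgroup G | DiscreteTopology Γ'.toSubgroup} = Set.univ := by
      rw [Set.eq_univ_iff_forall]
      intro q
      induction q using Quotient.inductionOn' with
      | h a =>
        show DiscreteTopology (F a).toSubgroup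
        exact KM.discrete_conj Γ a
    calc (1 : ENNReal) = ν Set.univ := (measure_univ).symm
      _ = ν (f ⁻¹' {Γ' : ClosedSubgroup G | DiscreteTopology Γ'.toSubgroup}) := by rw [huniv]
      _ ≤ μ {Γ' : ClosedSubgroup G | DiscreteTopology Γ'.toSubgroup} :=
          Measure.le_map_apply hfm.aemeasurable _
  have hlt := hKey μ hμprob hμinv hμdisc
  by_contra hcon
  push_neg at hcon
  have huniv : f ⁻¹' {Γ' : ClosedSubgroup G | (Γ' : Set G) ∩ Ω ≠ {1}} = Set.univ := by
    rw [Set.eq_univ_iff_forall]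
    intro q
    induction q using Quotient.inductionOn' with
    | h a =>
      show ((F a : Set G)) ∩ Ω ≠ {1}
      exact hcon a
  have : (1 : ENNReal) ≤ μ {Γ' : ClosedSubgroup G | (Γ' : Set G) ∩ Ω ≠ {1}} := by
    calc (1 : ENNReal) = ν Set.univ := (measure_univ).symm
      _ = ν (f ⁻¹' {Γ' : ClosedSubgroup G | (Γ' : Set G) ∩ Ω ≠ {1}}) := by rw [huniv]
      _ ≤ μ _ := Measure.le_map_apply hfm.aemeasurable _
  exact absurd (lt_of_le_of_lt this hlt) (lt_irrefl _)
end

section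
/- Let G be a locally compact, totally disconnected group. The following are equivalent: (a) G has no discrete small subgroups, i.e., some identity neighbourhood contains no nontrivial discrete subgroup; (b) G admits an open torsion-free subgroup; (c) there is an identity neighbourhood U such that every discrete subgroup Γ of G satisfies Γ ∩ U = {1}. -/
open MeasureTheory Topology

open scoped Pointwise

/-- Old Mathlib `Monoid.IsTorsionFree` (removed): no nontrivial element has finite order. -/
def Monoid.IsTorsionFree (G : Type*) [Monoid G] : Prop :=
  ∀ g : G, g ≠ 1 → ¬IsOfFinOrder g

section Aux

variable {G : Type*} [Group G] [TopologicalSpace G] [IsTopologicalGroup G] [T2Space G]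
    [LocallyCompactSpace G] [TotallyDisconnectedSpace G]

open Set Filter

/-- Variant of `TopologicalGroup.exist_mul_closure_nhd` for a compact open set in a
not-necessarily-compact group. -/
lemma exist_mul_closure_nhd' {W : Set G} (Wcompact : IsCompact W) (Wopen : IsOpen W) :
    ∃ T ∈ 𝓝 (1 : G), W * T ⊆ W := by
  apply Wcompact.induction_on (p := fun S ↦ ∃ T ∈ 𝓝 (1 : G), S * T ⊆ W)
    ⟨Set.univ, by simp only [univ_mem, empty_mul, empty_subset, and_self]⟩
    (fun _ _ huv ⟨T, hT, mem⟩ ↦ ⟨T, hT, (mul_subset_mul_right huv).trans mem⟩)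
    fun U V ⟨T₁, hT₁, mem1⟩ ⟨T₂, hT₂, mem2⟩ ↦ ⟨T₁ ∩ T₂, inter_mem hT₁ hT₂, by
      rw [union_mul]
      exact union_subset (mul_subset_mul_left inter_subset_left |>.trans mem1)
        (mul_subset_mul_left inter_subset_right |>.trans mem2)⟩
  intro x memW
  have : (x, 1) ∈ (fun p : G × G ↦ p.1 * p.2) ⁻¹' W := by simp [memW]
  rcases isOpen_prod_iff.mp (continuous_mul.isOpen_preimage W Wopen) x 1 this with
    ⟨U, V, Uopen, Vopen, xmemU, onememV, prodsub⟩
  have h6 : U * V ⊆ W := mul_subset_iff.mpr (fun _ hx _ hy ↦ prodsub (mk_mem_prod hx hy))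
  exact ⟨U ∩ W, ⟨U, Uopen.mem_nhds xmemU, W, fun _ a ↦ a, rfl⟩,
    V, IsOpen.mem_nhds Vopen onememV, fun _ a ↦ h6 ((mul_subset_mul_right inter_subset_left) a)⟩

/-- Van Dantzig's theorem: in a locally compact totally disconnected group, every
neighbourhood of the identity contains a compact open subgroup. -/
theorem exists_isCompact_isOpen_subgroup {U : Set G} (hU : U ∈ 𝓝 (1 : G)) :
    ∃ H : Subgroup G, IsCompact (H : Set G) ∧ IsOpen (H : Set G) ∧ (H : Set G) ⊆ U := by
  -- first get a compact open set `W` with `1 ∈ W ⊆ U`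
  obtain ⟨U', hU'U, hU'open, hU'mem⟩ := mem_nhds_iff.mp hU
  obtain ⟨K, Kcomp, hK1, hKU⟩ := exists_compact_subset hU'open hU'mem
  obtain ⟨W, Wclopen, hW1, hWK⟩ :=
    loc_compact_Haus_tot_disc_of_zero_dim.mem_nhds_iff.mp
      (isOpen_interior.mem_nhds hK1)
  have Wcompact : IsCompact W := Kcomp.of_isClosed_subset Wclopen.1 (hWK.trans interior_subset)
  have hWU : W ⊆ U := (hWK.trans interior_subset).trans (hKU.trans hU'U)
  -- get a symmetric open neighbourhood `V` of `1` with `W * V ⊆ W`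
  obtain ⟨T, hT, hWT⟩ := exist_mul_closure_nhd' Wcompact Wclopen.2
  rcases mem_nhds_iff.mp hT with ⟨O, hOT, Oopen, honeO⟩
  set V : Set G := O ∩ O⁻¹ with hVdef
  have Vopen : IsOpen V := Oopen.inter Oopen.inv
  have Vmem : (1 : G) ∈ V := ⟨honeO, by simpa using honeO⟩
  have Vinv : V⁻¹ = V := by
    ext x; simp only [hVdef, Set.mem_inter_iff, Set.mem_inv, inv_inv]; tauto
  have Vmul : W * V ⊆ W :=
    (mul_subset_mul_left (inter_subset_left.trans hOT)).trans hWT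
  -- form the subgroup generated by `V`
  let S : Subgroup G := {
    carrier := ⋃ n, V ^ (n + 1)
    mul_mem' := fun ha hb ↦ by
      rcases mem_iUnion.mp ha with ⟨k, hk⟩
      rcases mem_iUnion.mp hb with ⟨l, hl⟩
      apply mem_iUnion.mpr
      exact ⟨k + 1 + l, by rw [add_assoc, pow_add]; exact Set.mul_mem_mul hk hl⟩
    one_mem' := mem_iUnion.mpr ⟨0, by simpa using Vmem⟩
    inv_mem' := fun ha ↦ by
      rcases mem_iUnion.mp ha with ⟨k, hk⟩
      apply mem_iUnion.mpr
      refine ⟨k, ?_⟩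
      rw [← Vinv]
      simpa only [inv_pow, Set.mem_inv, inv_inv] using hk }
  have Sopen : IsOpen (S : Set G) := by
    refine isOpen_iUnion (fun n ↦ ?_)
    rw [pow_succ]
    exact Vopen.mul_left
  have mulVpow (n : ℕ) : W * V ^ (n + 1) ⊆ W := by
    induction' n with n ih
    · simpa using Vmul
    · rw [pow_succ, ← mul_assoc]
      exact (Set.mul_subset_mul_right ih).trans Vmul
  have hsubW : (S : Set G) ⊆ W := by
    refine iUnion_subset fun n x hx ↦ mulVpow n ?_
    exact ⟨1, hW1, x, hx, one_mul x⟩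
  have Sclosed : IsClosed (S : Set G) := S.isClosed_of_isOpen Sopen
  exact ⟨S, Wcompact.of_isClosed_subset Sclosed hsubW, Sopen, hsubW.trans hWU⟩

end Aux

/-- For a locally compact totally disconnected group `G`, having no discrete small subgroups, the
existence of an open torsion-free subgroup, and uniform discreteness of the discrete subgroups
are all equivalent. -/
theorem ndss_tfae {G : Type*} [Group G] [TopologicalSpace G] [IsTopologicalGroup G] [T2Space G]
    [LocallyCompactSpace G] [TotallyDisconnectedSpace G] :
    List.TFAE [
      ∃ U ∈ 𝓝 (1 : G), ∀ Γ : Subgroup G, DiscreteTopology Γ → (Γ : Set G) ⊆ U → Γ = ⊥,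
      ∃ H : Subgroup G, IsOpen (H : Set G) ∧ Monoid.IsTorsionFree H,
      ∃ U ∈ 𝓝 (1 : G), ∀ Γ : Subgroup G, DiscreteTopology Γ → (Γ : Set G) ∩ U = {1}] := by
  tfae_have 1 → 2 := by
    rintro ⟨U, hU, h⟩
    obtain ⟨H, -, Hopen, HU⟩ := exists_isCompact_isOpen_subgroup hU
    refine ⟨H, Hopen, fun x hx hfin ↦ hx ?_⟩
    -- `x : H` of finite order generates a finite, hence discrete, subgroup inside `U`
    have hfin' : IsOfFinOrder (x : G) := Submonoid.isOfFinOrder_coe.mpr hfin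
    set Γ : Subgroup G := Subgroup.zpowers (x : G)
    have hΓfin : (Γ : Set G).Finite := hfin'.finite_zpowers
    haveI : Finite Γ := hΓfin.to_subtype
    haveI : DiscreteTopology Γ := inferInstance
    have hΓU : (Γ : Set G) ⊆ U := fun g hg ↦ by
      rcases Subgroup.mem_zpowers_iff.mp hg with ⟨k, hk⟩
      exact HU (hk ▸ zpow_mem x.2 k)
    have := h Γ inferInstance hΓU
    have hx1 : (x : G) = 1 := by
      have : (x : G) ∈ Γ := Subgroup.mem_zpowers _
      rw [‹Γ = ⊥›] at this
      simpa using this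
    exact Subtype.ext hx1
  tfae_have 2 → 3 := by
    rintro ⟨H, Hopen, Htf⟩
    obtain ⟨K, Kcomp, Kopen, KH⟩ :=
      exists_isCompact_isOpen_subgroup (Hopen.mem_nhds H.one_mem)
    refine ⟨K, Kopen.mem_nhds K.one_mem, fun Γ hΓ ↦ ?_⟩
    apply Set.eq_singleton_iff_unique_mem.mpr
    refine ⟨⟨Γ.one_mem, K.one_mem⟩, fun x hx ↦ ?_⟩
    obtain ⟨hxΓ, hxK⟩ := hx
    -- the cyclic group generated by `x` is discrete, closed, contained in compact `K`: finite
    set Z : Subgroup G := Subgroup.zpowers x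
    have hZΓ : (Z : Set G) ⊆ (Γ : Set G) := by
      intro g hg
      rcases Subgroup.mem_zpowers_iff.mp hg with ⟨k, hk⟩
      rw [← hk]; exact Subgroup.zpow_mem Γ hxΓ k
    have hZK : (Z : Set G) ⊆ (K : Set G) := by
      intro g hg
      rcases Subgroup.mem_zpowers_iff.mp hg with ⟨k, hk⟩
      rw [← hk]; exact Subgroup.zpow_mem K hxK k
    haveI hΓ' : DiscreteTopology (Γ : Set G) := hΓ
    haveI : DiscreteTopology (Z : Set G) := DiscreteTopology.of_subset hΓ' hZΓ
    haveI : DiscreteTopology Z := ‹DiscreteTopology (Z : Set G)›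
    have Zclosed : IsClosed (Z : Set G) := Subgroup.isClosed_of_discrete
    have Zfin : (Z : Set G).Finite :=
      (Kcomp.of_isClosed_subset Zclosed hZK).finite (isDiscrete_iff_discreteTopology.mpr ‹DiscreteTopology (Z : Set G)›)
    have hxfin : IsOfFinOrder x := finite_zpowers.mp Zfin
    -- `x ∈ K ⊆ H` and `H` torsion-free forces `x = 1`
    have hxH : x ∈ H := KH hxK
    by_contra hx1
    have : IsOfFinOrder (⟨x, hxH⟩ : H) := Submonoid.isOfFinOrder_coe.mp hxfin
    exact Htf ⟨x, hxH⟩ (fun h ↦ hx1 (by simpa using congrArg Subtype.val h)) this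
  tfae_have 3 → 1 := by
    rintro ⟨U, hU, h⟩
    refine ⟨U, hU, fun Γ hΓ hsub ↦ ?_⟩
    have := h Γ hΓ
    rw [Set.inter_eq_self_of_subset_left hsub] at this
    exact Subgroup.eq_bot_iff_forall Γ |>.mpr fun x hx ↦ by
      have : x ∈ ({1} : Set G) := this ▸ hx
      simpa using this
  tfae_finish
end
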